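/- Every linear hypergraph in which every vertex has degree at most 2 has a line representation. -/

import Mathlib

set_option maxRecDepth 8000

abbrev Pt : Type := ℝ × ℝ

def IsLine (L : Set Pt) : Prop :=
  ∃ a b : Pt, a ≠ b ∧ L = (affineSpan ℝ {a, b} : Set Pt)

def IsSegment (S : Set Pt) : Prop :=
  ∃ a b : Pt, a ≠ b ∧ S = segment ℝ a b

structure LineHypergraph (ι : Type) where
  V : Finset ι
  E : Finset (Finset ι)
  edge_nonempty : ∀ e ∈ E, e.Nonempty
  edge_subset : ∀ e ∈ E, e ⊆ V

structure LineRep {ι : Type} (H : LineHypergraph ι) where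
  α : ι → Pt
  β : Finset ι → Set Pt
  α_inj : Set.InjOn α ↑H.V
  β_inj : Set.InjOn β ↑H.E
  β_isLine : ∀ e ∈ H.E, IsLine (β e)
  incidence : ∀ v ∈ H.V, ∀ e ∈ H.E, (v ∈ e ↔ α v ∈ β e)

structure SegmentRep {ι : Type} (H : LineHypergraph ι) where
  α : ι → Pt
  β : Finset ι → Set Pt
  α_inj : Set.InjOn α ↑H.V
  β_inj : Set.InjOn β ↑H.E
  β_isSegment : ∀ e ∈ H.E, IsSegment (β e)
  incidence : ∀ v ∈ H.V, ∀ e ∈ H.E, (v ∈ e ↔ α v ∈ β e)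

def SegmentRep.Strict {ι : Type} {H : LineHypergraph ι} (R : SegmentRep H) : Prop :=
  ∀ e ∈ H.E, ∀ e' ∈ H.E, e ≠ e' → (R.β e ∩ R.β e').Subsingleton

def LineRep.CrossingFree {ι : Type} {H : LineHypergraph ι} (R : LineRep H) : Prop :=
  ∀ e ∈ H.E, ∀ e' ∈ H.E, ((R.β e ∩ R.β e').Nonempty ↔ ∃ v, v ∈ e ∧ v ∈ e')

def SegmentRep.CrossingFree {ι : Type} {H : LineHypergraph ι} (R : SegmentRep H) : Prop :=
  ∀ e ∈ H.E, ∀ e' ∈ H.E, ((R.β e ∩ R.β e').Nonempty ↔ ∃ v, v ∈ e ∧ v ∈ e')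

lemma mem_line_iff (a : ℝ) (p : Pt) :
    p ∈ (affineSpan ℝ {((0:ℝ), -a^2), ((1:ℝ), 2*a - a^2)} : Set Pt) ↔ p.2 = 2*a*p.1 - a^2 := by
  rw [SetLike.mem_coe]
  constructor
  · intro hp
    rw [show p = (p - ((0:ℝ),-a^2)) +ᵥ (((0:ℝ),-a^2) : Pt) by simp] at hp
    rw [vadd_left_mem_affineSpan_pair] at hp
    obtain ⟨r, hr⟩ := hp
    have h1 := congrArg Prod.fst hr
    have h2 := congrArg Prod.snd hr
    simp [Prod.smul_def] at h1 h2
    linear_combination -h2 + 2*a*h1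
  · intro hp
    have : p = AffineMap.lineMap (((0:ℝ),-a^2) : Pt) (((1:ℝ), 2*a-a^2) : Pt) p.1 := by
      rw [AffineMap.lineMap_apply_module]
      ext
      · simp
      · simp
        nlinarith [hp]
    rw [this]
    exact AffineMap.lineMap_mem_affineSpan_pair _ _ _

lemma pair_eq_of_sum_prod {a b c d : ℝ} (h1 : a + b = c + d) (h2 : a * b = c * d) :
    ({a, b} : Finset ℝ) = {c, d} := by
  have h : (a - c) * (a - d) = 0 := by linear_combination a*h1 - h2
  rcases mul_eq_zero.mp h with h | h
  · have hac : a = c := by linarith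
    have hbd : b = d := by linarith
    rw [hac, hbd]
  · have had : a = d := by linarith
    have hbc : b = c := by linarith
    rw [had, hbc, Finset.pair_comm]

noncomputable def teF {ι : Type} [DecidableEq ι] (H : LineHypergraph ι) : Finset ι → ℝ :=
  fun e => if h : e ∈ H.E then ((H.E.equivFin ⟨e, h⟩ : ℕ) : ℝ) else 0

noncomputable def svF {ι : Type} [DecidableEq ι] (H : LineHypergraph ι) : ι → ℕ → ℝ :=
  fun v k => if h : v ∈ H.V then ((H.E.card + 2 * (H.V.equivFin ⟨v, h⟩ : ℕ) + k : ℕ) : ℝ) else 0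

def DF {ι : Type} [DecidableEq ι] (H : LineHypergraph ι) : ι → Finset (Finset ι) :=
  fun v => H.E.filter (fun e => v ∈ e)

noncomputable def SF {ι : Type} [DecidableEq ι] (H : LineHypergraph ι) : ι → Finset ℝ :=
  fun v => (DF H v).image (teF H) ∪
    (if (DF H v).card = 2 then ∅ else
      if (DF H v).card = 1 then {svF H v 0} else {svF H v 0, svF H v 1})

section Facts
variable {ι : Type} [DecidableEq ι] (H : LineHypergraph ι)

lemma teF_lt {e : Finset ι} (he : e ∈ H.E) : teF H e < H.E.card := by
  simp only [teF]; rw [dif_pos he]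
  exact_mod_cast (H.E.equivFin ⟨e, he⟩).isLt

lemma svF_ge {v : ι} (hv : v ∈ H.V) (k : ℕ) : (H.E.card : ℝ) ≤ svF H v k := by
  simp only [svF]; rw [dif_pos hv]
  exact_mod_cast Nat.le_add_right _ _ |>.trans (Nat.le_add_right _ _)

lemma teF_ne_svF {e : Finset ι} {v : ι} (he : e ∈ H.E) (hv : v ∈ H.V) (k : ℕ) :
    teF H e ≠ svF H v k :=
  ne_of_lt (lt_of_lt_of_le (teF_lt H he) (svF_ge H hv k))

lemma teF_injOn : Set.InjOn (teF H) ↑H.E := by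
  intro e he e' he' h
  simp only [teF] at h; rw [dif_pos (Finset.mem_coe.mp he), dif_pos (Finset.mem_coe.mp he')] at h
  have : H.E.equivFin ⟨e, he⟩ = H.E.equivFin ⟨e', he'⟩ := Fin.ext (by exact_mod_cast h)
  simpa using H.E.equivFin.injective this

lemma svF_injv {v w : ι} {k k' : ℕ} (hv : v ∈ H.V) (hw : w ∈ H.V) (hk : k ≤ 1) (hk' : k' ≤ 1)
    (h : svF H v k = svF H w k') : v = w := by
  simp only [svF] at h; rw [dif_pos hv, dif_pos hw] at h
  have h' : H.E.card + 2 * (H.V.equivFin ⟨v, hv⟩ : ℕ) + k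
      = H.E.card + 2 * (H.V.equivFin ⟨w, hw⟩ : ℕ) + k' := by exact_mod_cast h
  have : H.V.equivFin ⟨v, hv⟩ = H.V.equivFin ⟨w, hw⟩ := Fin.ext (by omega)
  simpa using H.V.equivFin.injective this

lemma svF_ne {v : ι} (hv : v ∈ H.V) : svF H v 0 ≠ svF H v 1 := by
  simp only [svF, dif_pos hv]
  intro h
  have : H.E.card + 2 * (H.V.equivFin ⟨v, hv⟩ : ℕ) + 0
      = H.E.card + 2 * (H.V.equivFin ⟨v, hv⟩ : ℕ) + 1 := by exact_mod_cast h
  omega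

lemma DF_subset (v : ι) : DF H v ⊆ H.E := Finset.filter_subset _ _

lemma SF_card {v : ι} (hv : v ∈ H.V) (hd : (DF H v).card ≤ 2) : (SF H v).card = 2 := by
  rcases (by omega : (DF H v).card = 0 ∨ (DF H v).card = 1 ∨ (DF H v).card = 2) with h | h | h
  · have hS : SF H v = {svF H v 0, svF H v 1} := by
      simp [SF, Finset.card_eq_zero.mp h]
    rw [hS, Finset.card_pair (svF_ne H hv)]
  · obtain ⟨e, he⟩ := Finset.card_eq_one.mp h
    have heE : e ∈ H.E := DF_subset H v (he ▸ Finset.mem_singleton_self e)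
    have hS : SF H v = {teF H e, svF H v 0} := by
      simp [SF, he, ← Finset.insert_eq]
    rw [hS, Finset.card_pair (teF_ne_svF H heE hv 0)]
  · have hS : SF H v = (DF H v).image (teF H) := by
      simp [SF, h]
    rw [hS, Finset.card_image_of_injOn ((teF_injOn H).mono (by exact_mod_cast DF_subset H v)), h]

lemma mem_SF_iff {v : ι} (hv : v ∈ H.V) {e : Finset ι} (he : e ∈ H.E) :
    teF H e ∈ SF H v ↔ e ∈ DF H v := by
  constructor
  · intro h
    rw [SF, Finset.mem_union] at h
    rcases h with h | h
    · obtain ⟨e', he', hee⟩ := Finset.mem_image.mp h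
      rwa [← teF_injOn H (by exact_mod_cast DF_subset H v he') (by exact_mod_cast he) hee]
    · exfalso
      split_ifs at h with h2 h1
      · simp at h
      · rw [Finset.mem_singleton] at h
        exact teF_ne_svF H he hv 0 h
      · rw [Finset.mem_insert, Finset.mem_singleton] at h
        rcases h with h | h
        · exact teF_ne_svF H he hv 0 h
        · exact teF_ne_svF H he hv 1 h
  · intro h
    exact Finset.mem_union_left _ (Finset.mem_image_of_mem _ h)

lemma svF_not_mem_SF {v w : ι} (hv : v ∈ H.V) (hw : w ∈ H.V) (hvw : v ≠ w) {k : ℕ} (hk : k ≤ 1) :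
    svF H v k ∉ SF H w := by
  intro h
  rw [SF, Finset.mem_union] at h
  rcases h with h | h
  · obtain ⟨e', he', hee⟩ := Finset.mem_image.mp h
    exact teF_ne_svF H (DF_subset H w he') hv k hee
  · split_ifs at h with h2 h1
    · simp at h
    · rw [Finset.mem_singleton] at h
      exact hvw (svF_injv H hv hw hk (by norm_num) h)
    · rw [Finset.mem_insert, Finset.mem_singleton] at h
      rcases h with h | h
      · exact hvw (svF_injv H hv hw hk (by norm_num) h)
      · exact hvw (svF_injv H hv hw hk (by norm_num) h)

lemma sv0_mem_SF {v : ι} (hd : (DF H v).card ≤ 1) : svF H v 0 ∈ SF H v := by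
  rcases (by omega : (DF H v).card = 0 ∨ (DF H v).card = 1) with h | h
  · rw [SF, h]; simp
  · rw [SF, h]; simp

lemma SF_eq_imp {v w : ι} (hv : v ∈ H.V) (hw : w ∈ H.V)
    (hdv : (DF H v).card ≤ 2) (hdw : (DF H w).card ≤ 2)
    (hlin : ∀ e ∈ H.E, ∀ e' ∈ H.E, e ≠ e' → (e ∩ e').card ≤ 1)
    (h : SF H v = SF H w) : v = w := by
  by_contra hvw
  have hv2 : (DF H v).card = 2 := by
    by_contra h2
    have hm : svF H v 0 ∈ SF H w := by
      rw [← h]; exact sv0_mem_SF H (by omega)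
    exact svF_not_mem_SF H hv hw hvw (by norm_num) hm
  have hw2 : (DF H w).card = 2 := by
    by_contra h2
    have hm : svF H w 0 ∈ SF H v := by
      rw [h]; exact sv0_mem_SF H (by omega)
    exact svF_not_mem_SF H hw hv (Ne.symm hvw) (by norm_num) hm
  obtain ⟨e1, e2, hne, hDv⟩ := Finset.card_eq_two.mp hv2
  have h1E : e1 ∈ H.E := DF_subset H v (hDv ▸ by simp)
  have h2E : e2 ∈ H.E := DF_subset H v (hDv ▸ by simp)
  have h1v : e1 ∈ DF H v := hDv ▸ by simp
  have h2v : e2 ∈ DF H v := hDv ▸ by simp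
  have h1w : e1 ∈ DF H w := (mem_SF_iff H hw h1E).mp (h ▸ (mem_SF_iff H hv h1E).mpr h1v)
  have h2w : e2 ∈ DF H w := (mem_SF_iff H hw h2E).mp (h ▸ (mem_SF_iff H hv h2E).mpr h2v)
  have hsub : ({v, w} : Finset ι) ⊆ e1 ∩ e2 := by
    intro x hx
    rw [Finset.mem_insert, Finset.mem_singleton] at hx
    rw [Finset.mem_inter]
    rcases hx with rfl | rfl
    · exact ⟨(Finset.mem_filter.mp h1v).2, (Finset.mem_filter.mp h2v).2⟩
    · exact ⟨(Finset.mem_filter.mp h1w).2, (Finset.mem_filter.mp h2w).2⟩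
  have : 2 ≤ (e1 ∩ e2).card := by
    calc 2 = ({v, w} : Finset ι).card := (Finset.card_pair hvw).symm
    _ ≤ _ := Finset.card_le_card hsub
  have := hlin e1 h1E e2 h2E hne
  omega

end Facts

theorem stmt5 {ι : Type} [DecidableEq ι] (H : LineHypergraph ι)
    (hlin : ∀ e ∈ H.E, ∀ e' ∈ H.E, e ≠ e' → (e ∩ e').card ≤ 1)
    (hdeg : ∀ v ∈ H.V, (H.E.filter (fun e => v ∈ e)).card ≤ 2) :
    Nonempty (LineRep H) := by
  have hd : ∀ v ∈ H.V, (DF H v).card ≤ 2 := hdeg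
  have α_inj : Set.InjOn (fun v => (((SF H v).sum id) / 2, (SF H v).prod id) : ι → Pt) ↑H.V := by
    intro v hv w hw heq
    have hv' : v ∈ H.V := hv
    have hw' : w ∈ H.V := hw
    obtain ⟨a, b, hab, hSv⟩ := Finset.card_eq_two.mp (SF_card H hv' (hd v hv'))
    obtain ⟨c, d, hcd, hSw⟩ := Finset.card_eq_two.mp (SF_card H hw' (hd w hw'))
    have h1 := congrArg Prod.fst heq
    have h2 := congrArg Prod.snd heq
    simp only [hSv, hSw, Finset.sum_pair hab, Finset.sum_pair hcd,
      Finset.prod_pair hab, Finset.prod_pair hcd, id] at h1 h2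
    have hsum : a + b = c + d := by linarith
    have hpq := pair_eq_of_sum_prod hsum h2
    exact SF_eq_imp H hv' hw' (hd v hv') (hd w hw') hlin (by rw [hSv, hSw, hpq])
  have β_inj : Set.InjOn
      (fun e => (affineSpan ℝ {((0:ℝ), -(teF H e)^2), ((1:ℝ), 2*(teF H e) - (teF H e)^2)} : Set Pt))
      ↑H.E := by
    intro e he e' he' h
    simp only at h
    have m1 : (((0:ℝ), -(teF H e)^2) : Pt) ∈
        (affineSpan ℝ {((0:ℝ), -(teF H e)^2), ((1:ℝ), 2*(teF H e) - (teF H e)^2)} : Set Pt) :=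
      (mem_line_iff _ _).mpr (by norm_num)
    have m2 : (((1:ℝ), 2*(teF H e) - (teF H e)^2) : Pt) ∈
        (affineSpan ℝ {((0:ℝ), -(teF H e)^2), ((1:ℝ), 2*(teF H e) - (teF H e)^2)} : Set Pt) :=
      (mem_line_iff _ _).mpr (by norm_num)
    rw [h] at m1 m2
    have q1 := (mem_line_iff _ _).mp m1
    have q2 := (mem_line_iff _ _).mp m2
    simp only at q1 q2
    have hu : teF H e = teF H e' := by nlinarith [q1, q2]
    exact teF_injOn H he he' hu
  have incidence : ∀ v ∈ H.V, ∀ e ∈ H.E, (v ∈ e ↔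
      ((((SF H v).sum id) / 2, (SF H v).prod id) : Pt) ∈
      (affineSpan ℝ {((0:ℝ), -(teF H e)^2), ((1:ℝ), 2*(teF H e) - (teF H e)^2)} : Set Pt)) := by
    intro v hv e he
    obtain ⟨a, b, hab, hSv⟩ := Finset.card_eq_two.mp (SF_card H hv (hd v hv))
    rw [mem_line_iff]
    simp only [hSv, Finset.sum_pair hab, Finset.prod_pair hab, id]
    constructor
    · intro hve
      have hm : teF H e ∈ SF H v := (mem_SF_iff H hv he).mpr (Finset.mem_filter.mpr ⟨he, hve⟩)
      rw [hSv, Finset.mem_insert, Finset.mem_singleton] at hm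
      rcases hm with hm | hm
      · rw [← hm]; ring
      · rw [← hm]; ring
    · intro hh
      have hz : (teF H e - a) * (teF H e - b) = 0 := by linear_combination hh
      have hm : teF H e ∈ SF H v := by
        rw [hSv, Finset.mem_insert, Finset.mem_singleton]
        rcases mul_eq_zero.mp hz with hz | hz
        · left; linarith
        · right; linarith
      exact (Finset.mem_filter.mp ((mem_SF_iff H hv he).mp hm)).2
  refine ⟨⟨fun v => (((SF H v).sum id) / 2, (SF H v).prod id),
    fun e => (affineSpan ℝ {((0:ℝ), -(teF H e)^2), ((1:ℝ), 2*(teF H e) - (teF H e)^2)} : Set Pt),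
    α_inj, β_inj, ?_, incidence⟩⟩
  intro e he
  refine ⟨((0:ℝ), -(teF H e)^2), ((1:ℝ), 2*(teF H e) - (teF H e)^2), ?_, rfl⟩
  intro hh
  exact zero_ne_one (congrArg Prod.fst hh)
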